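/- arXiv:2211.08470 — 2 statements merged into one kernel-verified Lean document; each statement's English description precedes it below -/
import Mathlib

section
/- Let K be a p-adic field with ring of integers O_K and uniformizer π, and let e ∈ O_K. Let M be a finite free O_K-module and Θ an O_K-linear endomorphism of M such that Θ^p − e^{p−1}·Θ is nilpotent on M/πM. Then the products P_n := ∏_{i=0}^{n−1} (Θ − i·e·id_M) converge to 0 in End_{O_K}(M) for the p-adic topology; that is, for every k ∈ ℕ there is N such that P_n ∈ p^k·End_{O_K}(M) for all n ≥ N. -/
open Polynomial Finset

section Aux

lemma lemZ (p : ℕ) [Fact p.Prime] :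
    ∏ j : ZMod p, ((X : (ZMod p)[X]) - C j) = X ^ p - X := by
  have hcard : Fintype.card (ZMod p) = p := ZMod.card p
  have h1 : (1 : ℕ) < p := (Fact.out : p.Prime).one_lt
  have hmonic : (X ^ p - X : (ZMod p)[X]).Monic := by
    apply monic_X_pow_sub
    simpa using (by exact_mod_cast h1 : (1 : WithBot ℕ) < (p : WithBot ℕ))
  have hroots := FiniteField.roots_X_pow_card_sub_X (ZMod p)
  rw [hcard] at hroots
  have hdeg : (X ^ p - X : (ZMod p)[X]).natDegree = p := by
    have := FiniteField.X_pow_card_sub_X_natDegree_eq (ZMod p) h1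
    simpa using this
  have := prod_multiset_X_sub_C_of_monic_of_roots_card_eq hmonic
    (by rw [hroots, hdeg]; simpa using hcard)
  rw [hroots] at this
  rw [← this]
  rfl

lemma lemS (p : ℕ) [Fact p.Prime] {F : Type*} [Field F] (f : ZMod p →+* F) (s : F) :
    ∏ j : ZMod p, (s - f j) = s ^ p - s := by
  have := congrArg (Polynomial.eval₂ f s) (lemZ p)
  simpa [Polynomial.eval₂_finset_prod] using this

lemma lemF (p : ℕ) [Fact p.Prime] {F : Type*} [Field F] (f : ZMod p →+* F) (t y : F) :
    ∏ j : ZMod p, (t - f j * y) = t ^ p - y ^ (p - 1) * t := by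
  have h2 : (2:ℕ) ≤ p := (Fact.out : p.Prime).two_le
  by_cases hy : y = 0
  · subst hy
    simp [Finset.prod_const, ZMod.card, zero_pow (show p - 1 ≠ 0 by omega)]
  · have key := lemS p f (t * y⁻¹)
    have hyp : y ^ p = y ^ (p-1) * y := by rw [← pow_succ]; congr 1; omega
    calc ∏ j : ZMod p, (t - f j * y)
        = ∏ j : ZMod p, (y * (t * y⁻¹ - f j)) := by
          refine Finset.prod_congr rfl fun j _ => ?_; field_simp
      _ = (∏ _j : ZMod p, y) * ∏ j : ZMod p, (t * y⁻¹ - f j) := Finset.prod_mul_distrib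
      _ = y ^ p * ((t * y⁻¹) ^ p - t * y⁻¹) := by
          rw [key, Finset.prod_const, Finset.card_univ, ZMod.card]
      _ = t ^ p - y ^ (p - 1) * t := by
          have e1 : y ^ p * (t * y⁻¹) ^ p = t ^ p := by
            rw [← mul_pow, mul_comm y, inv_mul_cancel_right₀ hy]
          have e2 : y ^ p * (t * y⁻¹) = y ^ (p-1) * t := by
            rw [hyp]; field_simp
          rw [mul_sub, e1, e2]

lemma lemB (p : ℕ) [Fact p.Prime] :
    ∏ j : ZMod p, ((X : Polynomial (Polynomial (ZMod p))) - C (C j * X)) =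
      X ^ p - C ((X : Polynomial (ZMod p)) ^ (p - 1)) * X := by
  set B := Polynomial (ZMod p)
  let F := FractionRing B
  have hinj : Function.Injective (algebraMap B F) := IsFractionRing.injective B F
  have hmapinj : Function.Injective (Polynomial.map (algebraMap B F)) :=
    Polynomial.map_injective _ hinj
  apply hmapinj
  have : Infinite F := Infinite.of_injective _ hinj
  rw [Polynomial.map_prod]
  apply Polynomial.funext
  intro t
  rw [Polynomial.eval_prod]
  simp only [Polynomial.map_sub, Polynomial.map_pow, Polynomial.map_mul, Polynomial.map_X,
    Polynomial.map_C, Polynomial.eval_sub, Polynomial.eval_pow, Polynomial.eval_mul,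
    Polynomial.eval_X, Polynomial.eval_C, map_mul]
  rw [map_pow]
  exact lemF p ((algebraMap B F).comp (Polynomial.C : ZMod p →+* B)) t (algebraMap B F X)

lemma lemA (p : ℕ) [Fact p.Prime] {A : Type*} [CommRing A] (f : ZMod p →+* A) (c : A) :
    ∏ j : ZMod p, ((X : A[X]) - C (f j * c)) = X ^ p - C (c ^ (p - 1)) * X := by
  have := congrArg (Polynomial.map (Polynomial.eval₂RingHom f c)) (lemB p)
  rw [Polynomial.map_prod] at this
  simpa using this

lemma lemReindex (p : ℕ) [Fact p.Prime] {β : Type*} [CommMonoid β] (a : ℕ) (h : ZMod p → β) :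
    ∏ i ∈ range p, h ((a + i : ℕ) : ZMod p) = ∏ j : ZMod p, h j := by
  haveI : NeZero p := ⟨(Fact.out : p.Prime).ne_zero⟩
  refine Finset.prod_nbij' (fun i => ((a + i : ℕ) : ZMod p))
    (fun j => (j - (a : ZMod p)).val) ?_ ?_ ?_ ?_ ?_
  · intro i _; exact Finset.mem_univ _
  · intro j _; exact Finset.mem_range.2 (ZMod.val_lt _)
  · intro i hi
    push_cast
    rw [add_sub_cancel_left]
    rw [ZMod.val_natCast_of_lt (Finset.mem_range.1 hi)]
  · intro j _
    push_cast
    rw [ZMod.natCast_val, ZMod.cast_id]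
    ring
  · intro i _; rfl

lemma lemCoeff (p : ℕ) [Fact p.Prime] {O : Type*} [CommRing O]
    (hnu : (p : O) ∈ nonunits O) (e : O) (a : ℕ) :
    ∀ n : ℕ, ∃ b : O,
      ((∏ i ∈ range p, ((X : O[X]) - C (((a + i : ℕ) : O) * e)))
        - (X ^ p - C (e ^ (p - 1)) * X)).coeff n = (p : O) * b := by
  set J : Ideal O := Ideal.span {(p : O)} with hJ
  haveI : CharP (O ⧸ J) p := CharP.quotient O p hnu
  set f : ZMod p →+* O ⧸ J := ZMod.castHom (dvd_refl p) (O ⧸ J)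
  set q : O →+* O ⧸ J := Ideal.Quotient.mk J
  have hmap : (((∏ i ∈ range p, ((X : O[X]) - C (((a + i : ℕ) : O) * e)))
        - (X ^ p - C (e ^ (p - 1)) * X))).map q = 0 := by
    rw [Polynomial.map_sub, Polynomial.map_prod]
    have h1 : ∀ i ∈ range p, ((X : O[X]) - C (((a + i : ℕ) : O) * e)).map q
        = (X : (O ⧸ J)[X]) - C (f ((a + i : ℕ) : ZMod p) * q e) := by
      intro i _
      rw [Polynomial.map_sub, Polynomial.map_X, Polynomial.map_C]
      congr 1
      rw [map_mul]
      congr 1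
      rw [map_natCast f, map_natCast q]
    rw [Finset.prod_congr rfl h1,
      lemReindex p a (fun j => (X : (O ⧸ J)[X]) - C (f j * q e)), lemA p f (q e)]
    rw [Polynomial.map_sub, Polynomial.map_pow, Polynomial.map_mul, Polynomial.map_X,
      Polynomial.map_C]
    simp only [map_pow]
    ring
  intro n
  have := congrArg (fun g => Polynomial.coeff g n) hmap
  simp only [Polynomial.coeff_map, Polynomial.coeff_zero] at this
  rw [Ideal.Quotient.eq_zero_iff_mem, hJ, Ideal.mem_span_singleton] at this
  obtain ⟨b, hb⟩ := this
  exact ⟨b, hb⟩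

lemma lemL1 (p : ℕ) [Fact p.Prime] {O : Type*} [CommRing O]
    (hnu : (p : O) ∈ nonunits O) (e : O)
    {M : Type*} [AddCommGroup M] [Module O M] (Θ : Module.End O M) (a : ℕ) :
    ∃ C1 : Module.End O M,
      aeval Θ (∏ i ∈ range p, ((X : O[X]) - C (((a + i : ℕ) : O) * e)))
        = (Θ ^ p - e ^ (p - 1) • Θ) + (p : O) • C1 := by
  set D : O[X] := (∏ i ∈ range p, ((X : O[X]) - C (((a + i : ℕ) : O) * e)))
      - (X ^ p - C (e ^ (p - 1)) * X) with hD
  choose b hb using lemCoeff p hnu e a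
  refine ⟨∑ n ∈ range (D.natDegree + 1), b n • Θ ^ n, ?_⟩
  have h2 : aeval Θ D = (p : O) • ∑ n ∈ range (D.natDegree + 1), b n • Θ ^ n := by
    rw [aeval_eq_sum_range, Finset.smul_sum]
    exact Finset.sum_congr rfl fun n _ => by rw [hb n, mul_smul]
  have h3 : aeval Θ (X ^ p - C (e ^ (p - 1)) * X) = Θ ^ p - e ^ (p - 1) • Θ := by
    rw [map_sub, map_pow, aeval_X, map_mul, aeval_C, aeval_X, ← Algebra.smul_def]
  have h4 : (∏ i ∈ range p, ((X : O[X]) - C (((a + i : ℕ) : O) * e)))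
      = D + (X ^ p - C (e ^ (p - 1)) * X) := by rw [hD]; ring
  rw [h4, map_add, h2, h3]
  abel

lemma lemSplit {O : Type*} [CommRing O] (e : O) (a A B : ℕ) :
    (∏ i ∈ range (A + B), ((X : O[X]) - C (((a + i : ℕ) : O) * e)))
      = (∏ i ∈ range A, ((X : O[X]) - C (((a + i : ℕ) : O) * e)))
        * ∏ i ∈ range B, ((X : O[X]) - C ((((a + A) + i : ℕ) : O) * e)) := by
  rw [Finset.prod_range_add]
  congr 1
  exact Finset.prod_congr rfl fun i _ => by rw [add_assoc]

lemma lemL2 (p : ℕ) [Fact p.Prime] {O : Type*} [CommRing O]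
    (hnu : (p : O) ∈ nonunits O) (e : O)
    {M : Type*} [AddCommGroup M] [Module O M] (Θ : Module.End O M) (m : ℕ) (a : ℕ) :
    ∃ C2 : Module.End O M,
      aeval Θ (∏ i ∈ range (p * m), ((X : O[X]) - C (((a + i : ℕ) : O) * e)))
        = (Θ ^ p - e ^ (p - 1) • Θ) ^ m + (p : O) • C2 := by
  induction m generalizing a with
  | zero => exact ⟨0, by simp⟩
  | succ m ih =>
    obtain ⟨C2, h2⟩ := ih a
    obtain ⟨C1, h1⟩ := lemL1 p hnu e Θ (a + p * m)
    set S : Module.End O M := Θ ^ p - e ^ (p - 1) • Θ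
    refine ⟨S ^ m * C1 + C2 * S + (p : O) • (C2 * C1), ?_⟩
    rw [show p * (m + 1) = p * m + p from by ring, lemSplit e a (p * m) p,
      map_mul, h2, h1]
    simp only [mul_add, add_mul, smul_mul_assoc, mul_smul_comm, smul_add, pow_succ]
    rw [smul_smul, mul_comm ((p : O)) ((p : O)), ← smul_smul]
    abel

noncomputable def Ij {O : Type*} [CommRing O] (p : ℕ) (π : O) (j : ℕ) : Ideal O :=
  Ideal.span ((fun t => (p : O) ^ t * π ^ (j - t)) '' Set.Iic j)

lemma one_mem_Ij0 {O : Type*} [CommRing O] (p : ℕ) (π : O) : (1 : O) ∈ Ij p π 0 :=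
  Ideal.subset_span ⟨0, Set.mem_Iic.2 le_rfl, by simp⟩

lemma mul_mem_Ij_gen {O : Type*} [CommRing O] (p : ℕ) (π : O) {j : ℕ} {c : O}
    (hc : ∀ t, t ≤ j → ((p : O) ^ t * π ^ (j - t)) * c ∈ Ij p π (j + 1))
    {r : O} (hr : r ∈ Ij p π j) : r * c ∈ Ij p π (j + 1) := by
  refine Submodule.span_induction ?_ ?_ ?_ ?_ hr
  · rintro x ⟨t, ht, rfl⟩
    exact hc t (Set.mem_Iic.1 ht)
  · simpa using (Ij p π (j + 1)).zero_mem
  · intro x y _ _ hx hy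
    rw [add_mul]
    exact (Ij p π (j + 1)).add_mem hx hy
  · intro a x _ hx
    rw [smul_eq_mul, mul_assoc]
    exact (Ij p π (j + 1)).mul_mem_left a hx

lemma mul_mem_Ij_pi {O : Type*} [CommRing O] (p : ℕ) (π : O) {j : ℕ} {r : O}
    (hr : r ∈ Ij p π j) : r * π ∈ Ij p π (j + 1) := by
  refine mul_mem_Ij_gen p π (fun t ht => ?_) hr
  refine Ideal.subset_span ⟨t, Set.mem_Iic.2 (by omega), ?_⟩
  show (p : O) ^ t * π ^ (j + 1 - t) = (p : O) ^ t * π ^ (j - t) * π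
  rw [mul_assoc, ← pow_succ]
  congr 2
  omega

lemma mul_mem_Ij_p {O : Type*} [CommRing O] (p : ℕ) (π : O) {j : ℕ} {r : O}
    (hr : r ∈ Ij p π j) : r * (p : O) ∈ Ij p π (j + 1) := by
  refine mul_mem_Ij_gen p π (fun t ht => ?_) hr
  refine Ideal.subset_span ⟨t + 1, Set.mem_Iic.2 (by omega), ?_⟩
  show (p : O) ^ (t + 1) * π ^ (j + 1 - (t + 1)) = (p : O) ^ t * π ^ (j - t) * (p : O)
  rw [pow_succ]
  have h2 : j + 1 - (t + 1) = j - t := by omega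
  rw [h2]
  ring

lemma Ij_le_span {O : Type*} [CommRing O] (p : ℕ) (π : O) (k E j : ℕ)
    (hj : j = k + k * E) (hdvd : (p : O) ^ k ∣ π ^ (k * E)) :
    Ij p π j ≤ Ideal.span {(p : O) ^ k} := by
  rw [Ij]
  refine Ideal.span_le.2 ?_
  rintro x ⟨t, ht, rfl⟩
  have ht' : t ≤ j := Set.mem_Iic.1 ht
  rw [SetLike.mem_coe, Ideal.mem_span_singleton]
  show (p : O) ^ k ∣ (p : O) ^ t * π ^ (j - t)
  rcases le_or_gt k t with h | h
  · exact Dvd.dvd.mul_right (pow_dvd_pow _ h) _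
  · refine Dvd.dvd.mul_left ?_ _
    have h3 : π ^ (j - t) = π ^ (k * E) * π ^ (j - t - k * E) := by
      rw [← pow_add]; congr 1; omega
    rw [h3]
    exact Dvd.dvd.mul_right hdvd _

lemma mapStable {O : Type*} [CommRing O] {M : Type*} [AddCommGroup M] [Module O M]
    (L : Module.End O M) (J : Ideal O) {x : M} (hx : x ∈ J • (⊤ : Submodule O M)) :
    L x ∈ J • (⊤ : Submodule O M) := by
  refine Submodule.smul_induction_on hx ?_ ?_
  · intro r hr y _
    rw [map_smul]
    exact Submodule.smul_mem_smul hr Submodule.mem_top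
  · intro u v hu hv
    rw [map_add]
    exact Submodule.add_mem _ hu hv

lemma memSpanSmul {O : Type*} [CommRing O] {M : Type*} [AddCommGroup M] [Module O M]
    (c : O) {x : M} (hx : x ∈ Ideal.span {c} • (⊤ : Submodule O M)) :
    ∃ y : M, x = c • y := by
  refine Submodule.smul_induction_on hx ?_ ?_
  · intro r hr y _
    obtain ⟨b, rfl⟩ := Ideal.mem_span_singleton.1 hr
    exact ⟨b • y, by rw [mul_smul]⟩
  · rintro u v ⟨y1, rfl⟩ ⟨y2, rfl⟩
    exact ⟨y1 + y2, by rw [smul_add]⟩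

end Aux


/-- Let `K` be a `p`-adic field with ring of integers `O_K` and uniformizer
`π`, and let `e ∈ O_K`.  Let `M` be a finite free `O_K`-module and `Θ` an `O_K`-linear
endomorphism of `M` such that `Θ^p − e^(p−1)·Θ` is nilpotent on `M/πM`.  Then the products
`P n := ∏_{i=0}^{n−1} (Θ − i·e·id_M)` converge to `0` in `End_{O_K}(M)` for the `p`-adic
topology; that is, for every `k ∈ ℕ` there is `N` such that `P n ∈ p^k·End_{O_K}(M)` for all
`n ≥ N`. -/
theorem statement2 (p : ℕ) [Fact p.Prime]
    (O : Type*) [CommRing O] [IsDomain O] [IsDiscreteValuationRing O] [CharZero O]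
    [CharP (IsLocalRing.ResidueField O) p]
    [IsAdicComplete (IsLocalRing.maximalIdeal O) O]
    [PerfectRing (IsLocalRing.ResidueField O) p]
    (π : O) (hπ : Irreducible π) (e : O)
    (M : Type*) [AddCommGroup M] [Module O M] [Module.Finite O M] [Module.Free O M]
    (Θ : Module.End O M)
    -- `Θ^p − e^(p−1)·Θ` is nilpotent on `M/πM`
    (hnil : ∃ m : ℕ, ∀ x : M, ∃ y : M, ((Θ ^ p - e ^ (p - 1) • Θ) ^ m) x = π • y)
    -- `P n = ∏_{i=0}^{n−1} (Θ − i·e·id)`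
    (P : ℕ → Module.End O M) (hP0 : P 0 = 1)
    (hPs : ∀ n : ℕ, P (n + 1) = P n * (Θ - ((n : O) * e) • (1 : Module.End O M))) :
    ∀ k : ℕ, ∃ N : ℕ, ∀ n ≥ N, ∃ B : Module.End O M, P n = (p : O) ^ k • B := by
  obtain ⟨m, hm⟩ := hnil
  have hp : p.Prime := Fact.out
  set S : Module.End O M := Θ ^ p - e ^ (p - 1) • Θ with hS
  -- p is a nonunit
  have hpmax : (p : O) ∈ IsLocalRing.maximalIdeal O := by
    rw [← IsLocalRing.residue_eq_zero_iff]
    rw [map_natCast]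
    exact CharP.cast_eq_zero _ p
  have hnu : (p : O) ∈ nonunits O := hpmax
  -- p = u * π ^ E
  have hpne : (p : O) ≠ 0 := Nat.cast_ne_zero.2 hp.ne_zero
  obtain ⟨E, u, hpu⟩ := IsDiscreteValuationRing.eq_unit_mul_pow_irreducible hpne hπ
  have hpiE : π ^ E = (↑u⁻¹ : O) * (p : O) := by
    rw [hpu, ← mul_assoc, ← Units.val_mul, inv_mul_cancel, Units.val_one, one_mul]
  -- the local polynomial products
  set G : ℕ → ℕ → O[X] :=
    fun a n => ∏ i ∈ range n, ((X : O[X]) - C (((a + i : ℕ) : O) * e)) with hG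
  -- P n = aeval Θ (G 0 n)
  have hPG : ∀ n, P n = aeval Θ (G 0 n) := by
    intro n
    induction n with
    | zero => simp [hP0, hG]
    | succ n ih =>
      have hstep : G 0 (n + 1) = G 0 n * (X - C ((n : O) * e)) := by
        simp only [hG]
        rw [Finset.prod_range_succ]
        norm_num
      rw [hPs n, ih, hstep, map_mul]
      congr 1
      rw [map_sub, aeval_X, aeval_C, Algebra.algebraMap_eq_smul_one]
  -- the step lemma
  have stepL : ∀ (L : Module.End O M), (∃ C : Module.End O M, L = S ^ m + (p : O) • C) →
      ∀ (j : ℕ) (x : M), x ∈ Ij p π j • (⊤ : Submodule O M) →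
        L x ∈ Ij p π (j + 1) • (⊤ : Submodule O M) := by
    rintro L ⟨C, rfl⟩ j x hx
    refine Submodule.smul_induction_on hx ?_ ?_
    · intro r hr y _
      rw [map_smul]
      have happ : (S ^ m + (p : O) • C) y = (S ^ m) y + (p : O) • (C y) := by
        simp
      obtain ⟨y', hy'⟩ := hm y
      rw [happ, hy']
      rw [smul_add, smul_smul, smul_smul]
      exact Submodule.add_mem _
        (Submodule.smul_mem_smul (mul_mem_Ij_pi p π hr) Submodule.mem_top)
        (Submodule.smul_mem_smul (mul_mem_Ij_p p π hr) Submodule.mem_top)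
    · intro a b ha hb
      rw [map_add]
      exact Submodule.add_mem _ ha hb
  -- main claim
  have claim : ∀ (j a : ℕ) (x : M),
      (aeval Θ (G a (j * (p * m)))) x ∈ Ij p π j • (⊤ : Submodule O M) := by
    intro j
    induction j with
    | zero =>
      intro a x
      simp only [Nat.zero_mul, hG]
      rw [Finset.range_zero, Finset.prod_empty, map_one]
      have : ((1 : Module.End O M)) x = (1 : O) • x := by simp
      rw [this]
      exact Submodule.smul_mem_smul (one_mem_Ij0 p π) Submodule.mem_top
    | succ j ih =>
      intro a x
      have hsplit : G a ((j + 1) * (p * m)) = G a (p * m) * G (a + p * m) (j * (p * m)) := by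
        simp only [hG]
        rw [show (j + 1) * (p * m) = p * m + j * (p * m) from by ring]
        exact lemSplit e a (p * m) (j * (p * m))
      rw [hsplit, map_mul, Module.End.mul_apply]
      obtain ⟨C2, h2⟩ := lemL2 p hnu e Θ m a
      refine stepL _ ⟨C2, ?_⟩ j _ (ih (a + p * m) x)
      simp only [hG]
      rw [hS]
      exact h2
  -- conclusion
  intro k
  refine ⟨(k + k * E) * (p * m), fun n hn => ?_⟩
  set j : ℕ := k + k * E with hj
  set N : ℕ := j * (p * m) with hN
  -- p^k divides π^(k*E)
  have hdvd : (p : O) ^ k ∣ π ^ (k * E) := by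
    rw [mul_comm k E, pow_mul, hpiE, mul_pow]
    exact Dvd.dvd.mul_left dvd_rfl _
  -- pointwise divisibility
  have hpt : ∀ x : M, P n x ∈ Ideal.span {(p : O) ^ k} • (⊤ : Submodule O M) := by
    intro x
    have hsplitn : G 0 n = G 0 (n - N) * G (n - N) N := by
      have h6 : N = j * (p * m) := hN
      have h7 : n ≥ N := hn
      simp only [hG]
      have h5 := lemSplit e 0 (n - N) N
      simp only [Nat.zero_add] at h5 ⊢
      rw [Nat.sub_add_cancel h7] at h5
      exact h5
    rw [hPG n, hsplitn, map_mul, Module.End.mul_apply]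
    have hin : (aeval Θ (G (n - N) N)) x ∈ Ij p π j • (⊤ : Submodule O M) :=
      claim j (n - N) x
    have := mapStable (aeval Θ (G 0 (n - N))) (Ij p π j) hin
    exact Submodule.smul_mono_left (Ij_le_span p π k E j hj hdvd) this
  -- construct B via a basis
  let b := Module.Free.chooseBasis O M
  choose y hy using fun i => memSpanSmul ((p : O) ^ k) (hpt (b i))
  refine ⟨b.constr ℕ y, ?_⟩
  apply b.ext
  intro i
  rw [LinearMap.smul_apply, b.constr_basis]
  exact hy i
end

section
/- Let K be a p-adic field with ring of integers O_K and uniformizer π, and let e ∈ O_K. Let V be a finite-dimensional K-vector space, Θ a K-linear endomorphism of V, and set Q := Θ^p − e^{p−1}·Θ. Then the following are equivalent: (i) Q acts topologically nilpotently on V, i.e. the powers Q^n tend to 0 in End_K(V) for the canonical topology of the finite-dimensional K-vector space End_K(V); (ii) there exists a Θ-stable O_K-lattice M⁰ ⊆ V (a finitely generated O_K-submodule with M⁰ ⊗_{O_K} K = V, satisfying Θ(M⁰) ⊆ M⁰) such that the induced endomorphism of M⁰/πM⁰ determined by Q is nilpotent. -/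
/-- Let `K` be a `p`-adic field with ring of integers `O_K` and uniformizer
`π`, and let `e ∈ O_K`.  Let `V` be a finite-dimensional `K`-vector space, `Θ` a `K`-linear
endomorphism of `V`, and set `Q := Θ^p − e^(p−1)·Θ`.  Then the following are equivalent:
(i) `Q` acts topologically nilpotently on `V`, i.e. the powers `Qⁿ` tend to `0` in
`End_K(V)` for the canonical topology of the finite-dimensional `K`-vector space `End_K(V)`
(expressed via matrix coordinates in any basis: for every `k` the entries eventually lie in
`π^k·O_K`); (ii) there exists a `Θ`-stable `O_K`-lattice `M⁰ ⊆ V` (a finitely generated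
`O_K`-submodule with `M⁰ ⊗_{O_K} K = V`, satisfying `Θ(M⁰) ⊆ M⁰`) such that the induced
endomorphism of `M⁰/πM⁰` determined by `Q` is nilpotent. -/
theorem statement9 (p : ℕ) [Fact p.Prime]
    (O : Type*) [CommRing O] [IsDomain O] [IsDiscreteValuationRing O] [CharZero O]
    [CharP (IsLocalRing.ResidueField O) p]
    [IsAdicComplete (IsLocalRing.maximalIdeal O) O]
    [PerfectRing (IsLocalRing.ResidueField O) p]
    (K : Type*) [Field K] [Algebra O K] [IsFractionRing O K]
    (π : O) (hπ : Irreducible π) (e : O)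
    (V : Type*) [AddCommGroup V] [Module K V] [FiniteDimensional K V]
    [Module O V] [IsScalarTower O K V]
    (Θ Q : Module.End K V)
    (hQ : Q = Θ ^ p - (algebraMap O K e) ^ (p - 1) • Θ) :
    -- (i) `Q` is topologically nilpotent on `V`
    (∀ (ι : Type) [Fintype ι] [DecidableEq ι] (B : Module.Basis ι K V) (k : ℕ),
        ∃ N : ℕ, ∀ n ≥ N, ∀ i j : ι, ∃ y : O,
          LinearMap.toMatrix B B (Q ^ n) i j = algebraMap O K (π ^ k * y))
    ↔
    -- (ii) there is a `Θ`-stable `O_K`-lattice on which `Q` is nilpotent mod `π`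
    (∃ M0 : Submodule O V, M0.FG ∧ Submodule.span K (M0 : Set V) = ⊤ ∧
        (∀ x ∈ M0, Θ x ∈ M0) ∧
        ∃ m : ℕ, ∀ x ∈ M0, ∃ y ∈ M0, (Q ^ m) x = π • y) := by
  have hp : p.Prime := Fact.out
  have hinj : Function.Injective (algebraMap O K) := IsFractionRing.injective O K
  have hπ0 : π ≠ 0 := hπ.ne_zero
  have hsc : ∀ (r : O) (v : V), (algebraMap O K r) • v = r • v := fun r v => algebraMap_smul K r v
  have hcancel : ∀ (t : ℕ) (x y : V), (π ^ t : O) • x = (π ^ t) • y → x = y := by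
    intro t x y h
    rw [← hsc, ← hsc] at h
    have h0 : algebraMap O K (π ^ t) ≠ 0 := by
      intro h'
      exact pow_ne_zero t hπ0 (hinj (by rw [h', map_zero]))
    exact smul_right_injective V h0 h
  have hocomm : ∀ (r s : O) (v : V), r • s • v = s • r • v := by
    intro r s v
    rw [← hsc r, ← hsc s, ← hsc s, ← hsc r, smul_smul, smul_smul, mul_comm]
  have hdenom : ∀ c : K, ∃ (s : ℕ) (r : O), algebraMap O K (π ^ s) * c = algebraMap O K r := by
    intro c
    obtain ⟨⟨x, y⟩, hxy⟩ := IsLocalization.surj (nonZeroDivisors O) c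
    have hy0 : (y : O) ≠ 0 := nonZeroDivisors.coe_ne_zero y
    obtain ⟨s, u, hu⟩ := IsDiscreteValuationRing.eq_unit_mul_pow_irreducible hy0 hπ
    refine ⟨s, (↑u⁻¹ : O) * x, ?_⟩
    rw [hu, map_mul] at hxy
    have h1 : algebraMap O K (↑u⁻¹ : O) * algebraMap O K (↑u : O) = 1 := by
      rw [← map_mul, Units.inv_mul, map_one]
    rw [map_mul]
    linear_combination algebraMap O K (↑u⁻¹ : O) * hxy - c * algebraMap O K (π ^ s) * h1
  have hpad : ∀ (s t : ℕ), s ≤ t → ∀ c : K,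
      (∃ r, algebraMap O K (π ^ s) * c = algebraMap O K r) →
      (∃ r, algebraMap O K (π ^ t) * c = algebraMap O K r) := by
    rintro s t hst c ⟨r, hr⟩
    refine ⟨π ^ (t - s) * r, ?_⟩
    have ht : π ^ t = π ^ (t - s) * π ^ s := by rw [← pow_add, Nat.sub_add_cancel hst]
    rw [ht, map_mul, mul_assoc, hr, ← map_mul]
  have hθQ : Commute Θ Q := by
    show Θ * Q = Q * Θ
    rw [hQ, mul_sub, sub_mul, mul_smul_comm, smul_mul_assoc, ← pow_succ, ← pow_succ']
  have hθpQ : Θ ^ p = Q + (algebraMap O K e) ^ (p - 1) • Θ := by rw [hQ, sub_add_cancel]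
  constructor
  · -- (i) → (ii)
    intro h
    set d := Module.finrank K V with hd
    set B₀ : Module.Basis (Fin d) K V := Module.finBasis K V with hB₀
    set L : Submodule O V := Submodule.span O (Set.range B₀) with hL
    have memL : ∀ (x : V) (b : ℕ),
        (∀ i0 : Fin d, ∃ r, algebraMap O K (π ^ b) * (B₀.repr x i0) = algebraMap O K r) →
        (π ^ b : O) • x ∈ L := by
      intro x b hx
      choose r hr using hx
      have hxe : (π ^ b : O) • x = ∑ i0, r i0 • B₀ i0 := by
        calc (π ^ b : O) • x = algebraMap O K (π ^ b) • x := (hsc _ _).symm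
          _ = algebraMap O K (π ^ b) • ∑ i0, B₀.repr x i0 • B₀ i0 := by rw [B₀.sum_repr]
          _ = ∑ i0, (algebraMap O K (π ^ b) * B₀.repr x i0) • B₀ i0 := by
              rw [Finset.smul_sum]; simp only [smul_smul]
          _ = ∑ i0, r i0 • B₀ i0 := by
              refine Finset.sum_congr rfl fun i0 _ => ?_
              rw [hr i0, hsc]
      rw [hxe]
      exact Submodule.sum_mem _ fun i0 _ =>
        Submodule.smul_mem _ _ (Submodule.subset_span ⟨i0, rfl⟩)
    -- step 1 : common denominator for Θ^i (B₀ j), i < p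
    have step1 : ∃ b : ℕ, ∀ (i : Fin p) (j : Fin d), (π ^ b : O) • ((Θ ^ (i : ℕ)) (B₀ j)) ∈ L := by
      have hall : ∀ t : Fin p × Fin d × Fin d,
          ∃ s r, algebraMap O K (π ^ s) * (B₀.repr ((Θ ^ (t.1 : ℕ)) (B₀ t.2.1)) t.2.2)
            = algebraMap O K r := fun t => hdenom _
      choose s r hs using hall
      refine ⟨Finset.univ.sup s, fun i j => memL _ _ fun i0 => ?_⟩
      exact hpad (s (i, j, i0)) _ (Finset.le_sup (Finset.mem_univ (i, j, i0))) _
        ⟨r (i, j, i0), hs (i, j, i0)⟩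
    obtain ⟨b, hb⟩ := step1
    obtain ⟨N₀, hN₀⟩ := h (Fin d) B₀ (b + 1)
    set N := max N₀ 1 with hN
    have hN1 : 1 ≤ N := le_max_right _ _
    have key0 : ∀ n ≥ N, ∀ v ∈ L, ∃ w ∈ L, (Q ^ n) v = (π ^ (b + 1) : O) • w := by
      intro n hn v hv
      refine Submodule.span_induction ?_ ?_ ?_ ?_ hv
      · rintro x ⟨j, rfl⟩
        have he : ∀ i0 : Fin d, ∃ y, B₀.repr ((Q ^ n) (B₀ j)) i0
            = algebraMap O K (π ^ (b + 1) * y) := by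
          intro i0
          obtain ⟨y, hy⟩ := hN₀ n (le_trans (le_max_left _ _) hn) i0 j
          rw [LinearMap.toMatrix_apply] at hy
          exact ⟨y, hy⟩
        choose y hy using he
        refine ⟨∑ i0, y i0 • B₀ i0,
          Submodule.sum_mem _ fun i0 _ =>
            Submodule.smul_mem _ _ (Submodule.subset_span ⟨i0, rfl⟩), ?_⟩
        calc (Q ^ n) (B₀ j) = ∑ i0, B₀.repr ((Q ^ n) (B₀ j)) i0 • B₀ i0 := (B₀.sum_repr _).symm
          _ = ∑ i0, ((π ^ (b + 1) * y i0 : O)) • B₀ i0 := by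
              refine Finset.sum_congr rfl fun i0 _ => ?_
              rw [hy i0, hsc]
          _ = (π ^ (b + 1) : O) • ∑ i0, y i0 • B₀ i0 := by
              rw [Finset.smul_sum]
              exact Finset.sum_congr rfl fun i0 _ => (mul_smul _ _ _)
      · exact ⟨0, Submodule.zero_mem _, by simp⟩
      · rintro x y' hx hy' ⟨w1, hw1, he1⟩ ⟨w2, hw2, he2⟩
        exact ⟨w1 + w2, Submodule.add_mem _ hw1 hw2, by rw [map_add, he1, he2, smul_add]⟩
      · rintro a x hx ⟨w, hw, he⟩
        refine ⟨a • w, Submodule.smul_mem _ _ hw, ?_⟩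
        rw [← hsc a x, map_smul, hsc, he, hocomm]
    have key : ∀ n ≥ N, ∀ x : V, (π ^ b : O) • x ∈ L → ∃ z ∈ L, (Q ^ n) x = π • z := by
      intro n hn x hx
      obtain ⟨w, hw, he⟩ := key0 n hn _ hx
      refine ⟨w, hw, hcancel b _ _ ?_⟩
      have h1 : (Q ^ n) ((π ^ b : O) • x) = (π ^ b : O) • (Q ^ n) x := by
        rw [← hsc, map_smul, hsc]
      rw [h1] at he
      rw [he, pow_succ, mul_smul]
    set g : Fin N × Fin p × Fin d → V :=
      fun t => (Q ^ (t.1 : ℕ) * Θ ^ (t.2.1 : ℕ)) (B₀ t.2.2) with hg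
    set M0 := Submodule.span O (Set.range g) with hM0
    have hgM : ∀ t, g t ∈ M0 := fun t => Submodule.subset_span ⟨t, rfl⟩
    have hB₀M : ∀ j, B₀ j ∈ M0 := by
      intro j
      have hgj : g (⟨0, hN1⟩, ⟨0, hp.pos⟩, j) = B₀ j := by
        simp [hg]
      rw [← hgj]; exact hgM _
    have hLM : L ≤ M0 := Submodule.span_le.mpr (by rintro x ⟨j, rfl⟩; exact hB₀M j)
    refine ⟨M0, Submodule.fg_span (Set.finite_range g), ?_, ?_, N, ?_⟩
    · rw [eq_top_iff, ← B₀.span_eq]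
      refine Submodule.span_le.mpr ?_
      rintro x ⟨j, rfl⟩
      exact Submodule.subset_span (hB₀M j)
    · intro x hx
      refine Submodule.span_induction (p := fun x _ => Θ x ∈ M0) ?_ ?_ ?_ ?_ hx
      · rintro x ⟨⟨n, i, j⟩, rfl⟩
        have hcm : Θ * Q ^ (n : ℕ) = Q ^ (n : ℕ) * Θ := (hθQ.pow_right _)
        have e1 : Θ (g (n, i, j)) = (Q ^ (n : ℕ) * Θ ^ ((i : ℕ) + 1)) (B₀ j) := by
          show (Θ * (Q ^ (n : ℕ) * Θ ^ (i : ℕ))) (B₀ j) = _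
          rw [← mul_assoc, hcm, mul_assoc, ← pow_succ']
        rcases lt_or_ge ((i : ℕ) + 1) p with hip | hip
        · rw [e1]
          exact hgM (n, ⟨(i : ℕ) + 1, hip⟩, j)
        · have hip' : (i : ℕ) + 1 = p := le_antisymm i.isLt hip
          rw [e1, hip', hθpQ]
          have e2 : (Q ^ (n : ℕ) * (Q + (algebraMap O K e) ^ (p - 1) • Θ)) (B₀ j)
              = (Q ^ ((n : ℕ) + 1)) (B₀ j)
                + (e ^ (p - 1) : O) • ((Q ^ (n : ℕ) * Θ ^ 1) (B₀ j)) := by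
            rw [mul_add, mul_smul_comm, ← pow_succ, LinearMap.add_apply, LinearMap.smul_apply,
              ← map_pow, hsc, pow_one]
          rw [e2]
          refine Submodule.add_mem _ ?_
            (Submodule.smul_mem _ _ (hgM (n, ⟨1, hp.one_lt⟩, j)))
          rcases lt_or_ge ((n : ℕ) + 1) N with hn | hn
          · have : (Q ^ ((n : ℕ) + 1)) (B₀ j) = g (⟨(n : ℕ) + 1, hn⟩, ⟨0, hp.pos⟩, j) := by
              simp [hg]
            rw [this]; exact hgM _
          · have hxb : (π ^ b : O) • B₀ j ∈ L := by
              have := hb ⟨0, hp.pos⟩ j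
              simpa using this
            obtain ⟨z, hz, hze⟩ := key ((n : ℕ) + 1) hn (B₀ j) hxb
            rw [hze]
            exact Submodule.smul_mem _ _ (hLM hz)
      · simp
      · intro x y hx hy h1 h2
        rw [map_add]; exact Submodule.add_mem _ h1 h2
      · intro a x hx h1
        rw [← hsc, map_smul, hsc]
        exact Submodule.smul_mem _ _ h1
    · intro x hx
      refine Submodule.span_induction
        (p := fun x _ => ∃ y ∈ M0, (Q ^ N) x = π • y) ?_ ?_ ?_ ?_ hx
      · rintro x ⟨⟨n, i, j⟩, rfl⟩
        have e1 : (Q ^ N) (g (n, i, j)) = (Q ^ (N + (n : ℕ))) ((Θ ^ (i : ℕ)) (B₀ j)) := by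
          show (Q ^ N) ((Q ^ (n : ℕ) * Θ ^ (i : ℕ)) (B₀ j)) = _
          rw [Module.End.mul_apply, ← Module.End.mul_apply (Q ^ N), ← pow_add]
        obtain ⟨z, hz, hze⟩ := key (N + (n : ℕ)) (Nat.le_add_right _ _) _ (hb i j)
        exact ⟨z, hLM hz, by rw [e1, hze]⟩
      · exact ⟨0, Submodule.zero_mem _, by simp⟩
      · rintro x y hx hy ⟨y1, h1, e1⟩ ⟨y2, h2, e2⟩
        exact ⟨y1 + y2, Submodule.add_mem _ h1 h2, by rw [map_add, e1, e2, smul_add]⟩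
      · rintro a x hx ⟨y, hy, ey⟩
        refine ⟨a • y, Submodule.smul_mem _ _ hy, ?_⟩
        rw [← hsc a x, map_smul, hsc, ey, hocomm]
  · -- (ii) → (i)
    rintro ⟨M0, hFG, hspan, hΘs, m, hm⟩ ι _ _ B k
    have hθt : ∀ (t : ℕ), ∀ x ∈ M0, (Θ ^ t) x ∈ M0 := by
      intro t
      induction t with
      | zero => intro x hx; simpa using hx
      | succ t ih =>
        intro x hx
        rw [pow_succ, Module.End.mul_apply]
        exact ih _ (hΘs x hx)
    have hQM : ∀ x ∈ M0, Q x ∈ M0 := by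
      intro x hx
      have e1 : Q x = (Θ ^ p) x - (e ^ (p - 1) : O) • (Θ x) := by
        rw [hQ, LinearMap.sub_apply, LinearMap.smul_apply, ← map_pow, hsc]
      rw [e1]
      exact Submodule.sub_mem _ (hθt p x hx) (Submodule.smul_mem _ _ (hΘs x hx))
    have hQt : ∀ (t : ℕ), ∀ x ∈ M0, (Q ^ t) x ∈ M0 := by
      intro t
      induction t with
      | zero => intro x hx; simpa using hx
      | succ t ih =>
        intro x hx
        rw [pow_succ, Module.End.mul_apply]
        exact ih _ (hQM x hx)
    have hIter : ∀ (s : ℕ), ∀ x ∈ M0, ∃ y ∈ M0, (Q ^ (m * s)) x = (π ^ s : O) • y := by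
      intro s
      induction s with
      | zero => intro x hx; exact ⟨x, hx, by simp⟩
      | succ s ih =>
        intro x hx
        obtain ⟨y, hy, ey⟩ := hm x hx
        obtain ⟨z, hz, ez⟩ := ih y hy
        refine ⟨z, hz, ?_⟩
        have e1 : (Q ^ (m * (s + 1))) x = (Q ^ (m * s)) ((Q ^ m) x) := by
          rw [Nat.mul_succ, pow_add, Module.End.mul_apply]
        rw [e1, ey, ← hsc, map_smul, hsc, ez, smul_smul, ← pow_succ']
    have hKspan : ∀ v ∈ Submodule.span K (M0 : Set V), ∃ s : ℕ, (π ^ s : O) • v ∈ M0 := by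
      intro v hv
      refine Submodule.span_induction ?_ ?_ ?_ ?_ hv
      · intro x hx; exact ⟨0, by simpa using hx⟩
      · exact ⟨0, by simp⟩
      · rintro x y hx hy ⟨s, hs⟩ ⟨t, ht⟩
        refine ⟨s + t, ?_⟩
        rw [smul_add]
        refine Submodule.add_mem _ ?_ ?_
        · have : (π ^ (s + t) : O) • x = (π ^ t : O) • ((π ^ s : O) • x) := by
            rw [smul_smul, ← pow_add, add_comm]
          rw [this]; exact Submodule.smul_mem _ _ hs
        · have : (π ^ (s + t) : O) • y = (π ^ s : O) • ((π ^ t : O) • y) := by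
            rw [smul_smul, ← pow_add]
          rw [this]; exact Submodule.smul_mem _ _ ht
      · rintro a x hx ⟨s, hs⟩
        obtain ⟨t, r, hr⟩ := hdenom a
        refine ⟨t + s, ?_⟩
        have e1 : (π ^ (t + s) : O) • (a • x) = r • ((π ^ s : O) • x) := by
          rw [← hsc (π ^ (t + s)), ← hsc r, ← hsc (π ^ s), smul_smul, smul_smul]
          congr 1
          rw [pow_add, map_mul]
          linear_combination algebraMap O K (π ^ s) * hr
        rw [e1]; exact Submodule.smul_mem _ _ hs
    have haux : ∀ j : ι, ∃ s, (π ^ s : O) • B j ∈ M0 := by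
      intro j
      exact hKspan _ (by rw [hspan]; trivial)
    choose sa hsa using haux
    set a := Finset.univ.sup sa with hadef
    have ha : ∀ j, (π ^ a : O) • B j ∈ M0 := by
      intro j
      have e1 : (π ^ a : O) • B j = (π ^ (a - sa j) : O) • ((π ^ (sa j) : O) • B j) := by
        rw [smul_smul, ← pow_add, Nat.sub_add_cancel (Finset.le_sup (Finset.mem_univ j))]
      rw [e1]; exact Submodule.smul_mem _ _ (hsa j)
    obtain ⟨G, hG⟩ := hFG
    have hGd : ∀ (t : {x // x ∈ G} × ι),
        ∃ s r, algebraMap O K (π ^ s) * (B.repr (t.1 : V) t.2) = algebraMap O K r :=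
      fun t => hdenom _
    choose sb rb hrb using hGd
    set b := Finset.univ.sup sb with hbdef
    have hbM : ∀ x ∈ M0, ∀ i : ι,
        ∃ y, algebraMap O K (π ^ b) * (B.repr x i) = algebraMap O K y := by
      intro x hx
      rw [← hG] at hx
      refine Submodule.span_induction
        (p := fun x _ => ∀ i : ι, ∃ y, algebraMap O K (π ^ b) * (B.repr x i) = algebraMap O K y)
        ?_ ?_ ?_ ?_ hx
      · intro x hxG i
        exact hpad (sb (⟨x, hxG⟩, i)) b (Finset.le_sup (Finset.mem_univ _)) _
          ⟨rb (⟨x, hxG⟩, i), hrb (⟨x, hxG⟩, i)⟩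
      · intro i; exact ⟨0, by simp⟩
      · rintro x y hx hy h1 h2 i
        obtain ⟨y1, e1⟩ := h1 i
        obtain ⟨y2, e2⟩ := h2 i
        refine ⟨y1 + y2, ?_⟩
        rw [map_add, Finsupp.add_apply, mul_add, e1, e2, map_add]
      · rintro r x hx h1 i
        obtain ⟨y, ey⟩ := h1 i
        refine ⟨r * y, ?_⟩
        have e1 : B.repr (r • x) i = algebraMap O K r * B.repr x i := by
          rw [← hsc, map_smul, Finsupp.smul_apply, smul_eq_mul]
        rw [e1, map_mul]
        linear_combination algebraMap O K r * ey
    refine ⟨m * (k + a + b), fun n hn i j => ?_⟩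
    obtain ⟨y, hy, ey⟩ := hIter (k + a + b) _ (ha j)
    set w := (Q ^ (n - m * (k + a + b))) y with hw
    have hwM : w ∈ M0 := hQt _ _ hy
    have e1 : (Q ^ n) ((π ^ a : O) • B j) = (π ^ (k + a + b) : O) • w := by
      have h3 : (Q ^ n) ((π ^ a : O) • B j)
          = (Q ^ (n - m * (k + a + b))) ((Q ^ (m * (k + a + b))) ((π ^ a : O) • B j)) := by
        rw [← Module.End.mul_apply, ← pow_add, Nat.sub_add_cancel hn]
      rw [h3, ey, ← hsc, map_smul, hsc, hw]
    have e2 : (Q ^ n) (B j) = (π ^ (k + b) : O) • w := by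
      apply hcancel a
      have h4 : (Q ^ n) ((π ^ a : O) • B j) = (π ^ a : O) • (Q ^ n) (B j) := by
        rw [← hsc, map_smul, hsc]
      calc (π ^ a : O) • ((Q ^ n) (B j)) = (Q ^ n) ((π ^ a : O) • B j) := h4.symm
        _ = (π ^ (k + a + b) : O) • w := e1
        _ = (π ^ a : O) • ((π ^ (k + b) : O) • w) := by
            rw [smul_smul, ← pow_add]
            congr 2
            omega
    obtain ⟨y2, ey2⟩ := hbM w hwM i
    refine ⟨y2, ?_⟩
    rw [LinearMap.toMatrix_apply, e2, ← hsc, map_smul, Finsupp.smul_apply, smul_eq_mul]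
    calc algebraMap O K (π ^ (k + b)) * B.repr w i
        = algebraMap O K (π ^ k) * (algebraMap O K (π ^ b) * B.repr w i) := by
          rw [← mul_assoc, ← map_mul, ← pow_add]
      _ = algebraMap O K (π ^ k * y2) := by rw [ey2, map_mul]
end
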